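/- Let γ > 0, and let φ⁻ be locally absolutely continuous on (0,∞) with ∫₀^∞ r^{-2γ} |∂_r(r^{γ} φ⁻(r))|² dr < ∞. Then there exists a constant A⁻ ∈ ℂ such that lim_{r→0} |φ⁻(r) − A⁻ r^{−γ}| r^{−1/2} = 0 and ∫₀^∞ |φ⁻(r) − A⁻ r^{−γ}|²/r² dr ≤ 4/(2γ+1)² · ∫₀^∞ r^{−2γ} |∂_r(r^{γ} φ⁻(r))|² dr. -/

import Mathlib

open MeasureTheory Set Filter Topology
open scoped ENNReal NNReal


lemma aux_CS (G : ℝ → ℝ≥0∞) (hG : AEMeasurable G (volume.restrict (Ioi (0:ℝ))))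
    {β r : ℝ} (hβ : -1 < β) (hr : 0 < r) :
    (∫⁻ s in Ioc (0:ℝ) r, G s) ^ 2 ≤
      (∫⁻ s in Ioc (0:ℝ) r, ENNReal.ofReal (s ^ (-β)) * (G s) ^ 2) *
        ENNReal.ofReal (r ^ (β + 1) / (β + 1)) := by
  have hsub : Ioc (0:ℝ) r ⊆ Ioi 0 := Ioc_subset_Ioi_self
  have hGr : AEMeasurable G (volume.restrict (Ioc (0:ℝ) r)) :=
    hG.mono_measure (Measure.restrict_mono hsub le_rfl)
  set f : ℝ → ℝ≥0∞ := fun s => ENNReal.ofReal (s ^ (-β / 2)) * G s with hf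
  set g : ℝ → ℝ≥0∞ := fun s => ENNReal.ofReal (s ^ (β / 2)) with hg
  have hmrpow : ∀ e : ℝ, Measurable fun s : ℝ => ENNReal.ofReal (s ^ e) := by
    intro e
    apply Measurable.ennreal_ofReal
    measurability
  have hmf : AEMeasurable f (volume.restrict (Ioc (0:ℝ) r)) :=
    ((hmrpow _).aemeasurable.mul hGr)
  have hmg : AEMeasurable g (volume.restrict (Ioc (0:ℝ) r)) := (hmrpow _).aemeasurable
  have conj : Real.HolderConjugate 2 2 := Real.holderConjugate_iff.mpr ⟨one_lt_two, by norm_num⟩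
  have key := ENNReal.lintegral_mul_le_Lp_mul_Lq (volume.restrict (Ioc (0:ℝ) r)) conj hmf hmg
  have hae : (∫⁻ s in Ioc (0:ℝ) r, G s) = ∫⁻ s in Ioc (0:ℝ) r, (f * g) s := by
    apply lintegral_congr_ae
    filter_upwards [ae_restrict_mem measurableSet_Ioc] with s hs
    have hs0 : (0:ℝ) < s := hs.1
    simp only [Pi.mul_apply, hf, hg]
    rw [mul_comm (ENNReal.ofReal _) (G s), mul_assoc, ← ENNReal.ofReal_mul
      (Real.rpow_nonneg hs0.le _), ← Real.rpow_add hs0,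
      show -β / 2 + β / 2 = 0 by ring, Real.rpow_zero, ENNReal.ofReal_one, mul_one]
  have hf2 : (∫⁻ s in Ioc (0:ℝ) r, f s ^ (2:ℝ))
      = ∫⁻ s in Ioc (0:ℝ) r, ENNReal.ofReal (s ^ (-β)) * (G s) ^ 2 := by
    apply lintegral_congr_ae
    filter_upwards [ae_restrict_mem measurableSet_Ioc] with s hs
    have hs0 : (0:ℝ) < s := hs.1
    rw [hf]
    rw [ENNReal.mul_rpow_of_nonneg _ _ (by norm_num : (0:ℝ) ≤ 2),
      ENNReal.ofReal_rpow_of_nonneg (Real.rpow_nonneg hs0.le _) (by norm_num),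
      ← Real.rpow_mul hs0.le, show -β / 2 * 2 = -β by ring,
      show (2:ℝ) = ((2:ℕ):ℝ) by norm_num, ENNReal.rpow_natCast]
  have hg2 : (∫⁻ s in Ioc (0:ℝ) r, g s ^ (2:ℝ)) = ENNReal.ofReal (r ^ (β + 1) / (β + 1)) := by
    have e1 : (∫⁻ s in Ioc (0:ℝ) r, g s ^ (2:ℝ)) = ∫⁻ s in Ioc (0:ℝ) r,
        ENNReal.ofReal (s ^ β) := by
      apply lintegral_congr_ae
      filter_upwards [ae_restrict_mem measurableSet_Ioc] with s hs
      have hs0 : (0:ℝ) < s := hs.1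
      rw [hg, ENNReal.ofReal_rpow_of_nonneg (Real.rpow_nonneg hs0.le _) (by norm_num),
        ← Real.rpow_mul hs0.le, show β / 2 * 2 = β by ring]
    have hint : IntegrableOn (fun s : ℝ => s ^ β) (Ioc (0:ℝ) r) :=
      (intervalIntegrable_iff_integrableOn_Ioc_of_le hr.le).mp (intervalIntegral.intervalIntegrable_rpow' hβ)
    have e2 : (∫⁻ s in Ioc (0:ℝ) r, ENNReal.ofReal (s ^ β))
        = ENNReal.ofReal (∫ s in Ioc (0:ℝ) r, s ^ β) := by
      rw [ofReal_integral_eq_lintegral_ofReal hint]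
      filter_upwards [ae_restrict_mem measurableSet_Ioc] with s hs
      exact Real.rpow_nonneg hs.1.le _
    have e3 : (∫ s in Ioc (0:ℝ) r, s ^ β) = r ^ (β + 1) / (β + 1) := by
      rw [← intervalIntegral.integral_of_le hr.le, integral_rpow (Or.inl hβ),
        Real.zero_rpow (by linarith : β + 1 ≠ 0), sub_zero]
    rw [e1, e2, e3]
  have sq : ∀ x y : ℝ≥0∞, (x ^ ((1:ℝ)/2) * y ^ ((1:ℝ)/2)) ^ 2 = x * y := by
    intro x y
    rw [mul_pow, ← ENNReal.rpow_natCast (x ^ _) 2, ← ENNReal.rpow_natCast (y ^ _) 2,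
      ← ENNReal.rpow_mul, ← ENNReal.rpow_mul]
    norm_num
  calc (∫⁻ s in Ioc (0:ℝ) r, G s) ^ 2
      = (∫⁻ s in Ioc (0:ℝ) r, (f * g) s) ^ 2 := by rw [hae]
    _ ≤ ((∫⁻ s in Ioc (0:ℝ) r, f s ^ (2:ℝ)) ^ ((1:ℝ)/2)
          * (∫⁻ s in Ioc (0:ℝ) r, g s ^ (2:ℝ)) ^ ((1:ℝ)/2)) ^ 2 := by
        exact pow_le_pow_left' key 2
    _ = (∫⁻ s in Ioc (0:ℝ) r, f s ^ (2:ℝ)) * (∫⁻ s in Ioc (0:ℝ) r, g s ^ (2:ℝ)) := sq _ _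
    _ = _ := by rw [hf2, hg2]

lemma aux_hardy (γ : ℝ) (hγ : 0 < γ) (G : ℝ → ℝ≥0∞)
    (hG : AEMeasurable G (volume.restrict (Ioi (0:ℝ)))) (hGfin : ∀ s, G s ≠ ⊤) :
    ∫⁻ r in Ioi (0:ℝ), ENNReal.ofReal (r ^ (-(2*γ) - 2)) * (∫⁻ s in Ioc (0:ℝ) r, G s) ^ 2
      ≤ ENNReal.ofReal (4 / (2*γ+1)^2) *
          ∫⁻ s in Ioi (0:ℝ), ENNReal.ofReal (s ^ (-(2*γ))) * (G s) ^ 2 := by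
  set a : ℝ := γ - 1/2 with ha
  set c : ℝ := a - 2*γ - 1 with hc
  have hc1 : c < -1 := by rw [hc, ha]; linarith
  have ha1 : -1 < a := by rw [ha]; linarith
  set h : ℝ → ℝ≥0∞ := fun s => ENNReal.ofReal (s ^ (-a)) * (G s) ^ 2 with hh
  have hmrpow : ∀ e : ℝ, Measurable fun s : ℝ => ENNReal.ofReal (s ^ e) := by
    intro e; apply Measurable.ennreal_ofReal; measurability
  have hah : AEMeasurable h (volume.restrict (Ioi (0:ℝ))) :=
    (hmrpow _).aemeasurable.mul (hG.pow aemeasurable_const)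
  have hhfin : ∀ s, h s ≠ ⊤ := fun s =>
    ENNReal.mul_ne_top ENNReal.ofReal_ne_top (ENNReal.pow_ne_top (hGfin s))
  have hapos : (0:ℝ) < a + 1 := by rw [ha]; linarith
  have hgpos : (0:ℝ) < γ + 1/2 := by linarith
  -- step 1 : pointwise Cauchy-Schwarz
  have step1 : ∀ᵐ r ∂(volume.restrict (Ioi (0:ℝ))),
      ENNReal.ofReal (r ^ (-(2*γ) - 2)) * (∫⁻ s in Ioc (0:ℝ) r, G s) ^ 2
        ≤ ENNReal.ofReal (1/(a+1)) * (ENNReal.ofReal (r ^ c) * ∫⁻ s in Ioc (0:ℝ) r, h s) := by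
    filter_upwards [ae_restrict_mem measurableSet_Ioi] with r hr
    have hCS := aux_CS G hG ha1 hr
    calc ENNReal.ofReal (r ^ (-(2*γ) - 2)) * (∫⁻ s in Ioc (0:ℝ) r, G s) ^ 2
        ≤ ENNReal.ofReal (r ^ (-(2*γ) - 2)) *
            ((∫⁻ s in Ioc (0:ℝ) r, h s) * ENNReal.ofReal (r ^ (a+1) / (a+1))) :=
          mul_le_mul_right hCS _
      _ = (ENNReal.ofReal (r ^ (-(2*γ) - 2)) * ENNReal.ofReal (r ^ (a+1) / (a+1))) *
            ∫⁻ s in Ioc (0:ℝ) r, h s := by ring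
      _ = ENNReal.ofReal (1/(a+1)) * (ENNReal.ofReal (r ^ c) * ∫⁻ s in Ioc (0:ℝ) r, h s) := by
          have hrr : r ^ (-(2*γ) - 2) * (r ^ (a+1) / (a+1)) = (1/(a+1)) * r ^ c := by
            rw [div_eq_mul_one_div, ← mul_assoc, ← Real.rpow_add hr,
              show -(2*γ) - 2 + (a+1) = c from by rw [hc]; ring, mul_comm]
          rw [← ENNReal.ofReal_mul (Real.rpow_nonneg hr.le _), hrr,
            ENNReal.ofReal_mul (by positivity : (0:ℝ) ≤ 1/(a+1)), mul_assoc]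
  -- step 2 : reduce to the swapped integral J
  set J : ℝ≥0∞ := ∫⁻ r in Ioi (0:ℝ), ENNReal.ofReal (r ^ c) * ∫⁻ s in Ioc (0:ℝ) r, h s with hJ
  have step2 : ∫⁻ r in Ioi (0:ℝ), ENNReal.ofReal (r ^ (-(2*γ) - 2)) *
      (∫⁻ s in Ioc (0:ℝ) r, G s) ^ 2 ≤ ENNReal.ofReal (1/(a+1)) * J := by
    refine le_trans (lintegral_mono_ae step1) ?_
    rw [lintegral_const_mul' _ _ ENNReal.ofReal_ne_top]
  -- rewrite inner integral with indicators
  have hJ1 : ∀ r : ℝ, (∫⁻ s in Ioc (0:ℝ) r, h s)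
      = ∫⁻ s in Ioi (0:ℝ), (Ioc (0:ℝ) r).indicator h s := by
    intro r
    rw [lintegral_indicator measurableSet_Ioc, Measure.restrict_restrict measurableSet_Ioc,
      inter_eq_left.mpr Ioc_subset_Ioi_self]
  set F : ℝ → ℝ → ℝ≥0∞ := fun r s => ENNReal.ofReal (r ^ c) * (Ioc (0:ℝ) r).indicator h s
    with hF
  have hJ2 : J = ∫⁻ r in Ioi (0:ℝ), ∫⁻ s in Ioi (0:ℝ), F r s := by
    rw [hJ]
    apply lintegral_congr
    intro r
    rw [hJ1, ← lintegral_const_mul' _ _ ENNReal.ofReal_ne_top]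
  -- measurability of the kernel
  have hum : AEMeasurable (Function.uncurry F)
      ((volume.restrict (Ioi (0:ℝ))).prod (volume.restrict (Ioi (0:ℝ)))) := by
    have hS : MeasurableSet ({p : ℝ × ℝ | 0 < p.2} ∩ {p : ℝ × ℝ | p.2 ≤ p.1}) :=
      (measurableSet_lt measurable_const measurable_snd).inter
        (measurableSet_le measurable_snd measurable_fst)
    have e : Function.uncurry F = fun p : ℝ × ℝ => ENNReal.ofReal (p.1 ^ c) *
        ({p : ℝ × ℝ | 0 < p.2} ∩ {p : ℝ × ℝ | p.2 ≤ p.1}).indicator (fun q => h q.2) p := by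
      funext p
      simp only [Function.uncurry, hF, indicator, mem_Ioc, mem_inter_iff, mem_setOf_eq]
    rw [e]
    refine ((hmrpow c).comp measurable_fst).aemeasurable.mul ?_
    exact ((hah.comp_quasiMeasurePreserving Measure.quasiMeasurePreserving_snd).indicator hS)
  have hswap : J = ∫⁻ s in Ioi (0:ℝ), ∫⁻ r in Ioi (0:ℝ), F r s := by
    rw [hJ2]; exact lintegral_lintegral_swap hum
  -- step 3 : inner integral computation
  have inner : ∀ᵐ s ∂(volume.restrict (Ioi (0:ℝ))),
      (∫⁻ r in Ioi (0:ℝ), F r s)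
        = ENNReal.ofReal (1/(γ + 1/2)) * (ENNReal.ofReal (s ^ (-(2*γ))) * (G s) ^ 2) := by
    filter_upwards [ae_restrict_mem measurableSet_Ioi] with s hs
    have e2 : ∀ r ∈ Ioi (0:ℝ), F r s
        = (Ici s).indicator (fun r => ENNReal.ofReal (r ^ c)) r * h s := by
      intro r hr
      by_cases hsr : s ≤ r
      · simp [hF, indicator_of_mem, mem_Ioc.mpr ⟨hs, hsr⟩, mem_Ici.mpr hsr]
      · have h1 : s ∉ Ioc (0:ℝ) r := fun hmem => hsr hmem.2
        have h2 : r ∉ Ici s := fun hmem => hsr hmem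
        simp [hF, indicator_of_notMem h1, indicator_of_notMem h2]
    have hIci : Ici s ∩ Ioi (0:ℝ) = Ici s := by
      apply inter_eq_left.mpr
      intro x hx
      exact lt_of_lt_of_le (mem_Ioi.mp hs) (mem_Ici.mp hx)
    rw [setLIntegral_congr_fun_ae measurableSet_Ioi (ae_of_all _ e2),
      lintegral_mul_const' _ _ (hhfin s),
      lintegral_indicator measurableSet_Ici, Measure.restrict_restrict measurableSet_Ici,
      hIci,
      setLIntegral_congr (Filter.EventuallyEq.symm Ioi_ae_eq_Ici),
      ← ofReal_integral_eq_lintegral_ofReal (integrableOn_Ioi_rpow_of_lt hc1 hs) ?_,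
      integral_Ioi_rpow_of_lt hc1 hs]
    · simp only [hh]
      have hcv : c + 1 = -(γ + 1/2) := by rw [hc, ha]; ring
      have key3 : -s ^ (c+1) / (c+1) = (1/(γ+1/2)) * s ^ (c+1) := by
        rw [hcv]
        have hgen : ∀ X d : ℝ, 0 < d → -X / -d = (1/d) * X := by
          intro X d hd; field_simp
        exact hgen _ _ hgpos
      have hcomb : ENNReal.ofReal (s ^ (c+1)) * ENNReal.ofReal (s ^ (-a))
          = ENNReal.ofReal (s ^ (-(2*γ))) := by
        rw [← ENNReal.ofReal_mul (Real.rpow_nonneg hs.le _), ← Real.rpow_add hs,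
          show c + 1 + -a = -(2*γ) from by rw [hc]; ring]
      rw [key3, ENNReal.ofReal_mul (by positivity : (0:ℝ) ≤ 1/(γ+1/2)), ← hcomb]
      ring
    · filter_upwards [ae_restrict_mem measurableSet_Ioi] with x hx
      exact Real.rpow_nonneg (le_of_lt (lt_trans hs hx)) _
  -- assemble
  have hJval : J = ENNReal.ofReal (1/(γ + 1/2)) *
      ∫⁻ s in Ioi (0:ℝ), ENNReal.ofReal (s ^ (-(2*γ))) * (G s) ^ 2 := by
    rw [hswap, lintegral_congr_ae inner, lintegral_const_mul' _ _ ENNReal.ofReal_ne_top]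
  refine le_trans step2 ?_
  rw [hJval, ← mul_assoc, ← ENNReal.ofReal_mul (by positivity : (0:ℝ) ≤ 1/(a+1))]
  apply mul_le_mul_left
  apply ENNReal.ofReal_le_ofReal
  rw [ha]
  rw [show γ - 1/2 + 1 = γ + 1/2 by ring]
  rw [show 1/(γ+1/2) * (1/(γ+1/2)) = 1/(γ+1/2)^2 by field_simp]
  rw [show (4:ℝ)/(2*γ+1)^2 = 1/(γ+1/2)^2 by
    rw [show 2*γ+1 = 2*(γ+1/2) by ring]; rw [mul_pow]; field_simp; ring]

/-- Let `γ > 0` and let `φ⁻` be such that `r^γ φ⁻` is locally absolutely continuous on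
`(0,∞)` with derivative `g'` satisfying `∫₀^∞ r^{-2γ} |∂_r(r^γ φ⁻)|² dr < ∞`. Then there is
`A⁻ ∈ ℂ` with `|φ⁻(r) - A⁻ r^{-γ}| r^{-1/2} → 0` as `r → 0⁺` and
`∫₀^∞ |φ⁻(r) - A⁻ r^{-γ}|²/r² dr ≤ 4/(2γ+1)² ∫₀^∞ r^{-2γ} |∂_r(r^γ φ⁻)|² dr`. -/
theorem stmt_15 (γ : ℝ) (hγ : 0 < γ) (φ g' : ℝ → ℂ)
    (hloc : ∀ s ∈ Ioi (0:ℝ), ∀ t ∈ Ioi (0:ℝ), IntervalIntegrable g' volume s t)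
    (hFTC : ∀ s ∈ Ioi (0:ℝ), ∀ t ∈ Ioi (0:ℝ),
      ((t ^ γ : ℝ) : ℂ) * φ t - ((s ^ γ : ℝ) : ℂ) * φ s = ∫ r in s..t, g' r)
    (hint : ∫⁻ r in Ioi (0:ℝ), ENNReal.ofReal (r ^ (-(2*γ)) * ‖g' r‖^2) < ⊤) :
    ∃ A : ℂ,
      Tendsto (fun r : ℝ => ‖φ r - A * ((r ^ (-γ) : ℝ) : ℂ)‖ * r ^ (-(1:ℝ)/2))
        (𝓝[>] (0:ℝ)) (𝓝 0) ∧
      ∫⁻ r in Ioi (0:ℝ), ENNReal.ofReal (‖φ r - A * ((r ^ (-γ) : ℝ) : ℂ)‖^2 / r^2)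
        ≤ ENNReal.ofReal (4 / (2*γ+1)^2) *
            ∫⁻ r in Ioi (0:ℝ), ENNReal.ofReal (r ^ (-(2*γ)) * ‖g' r‖^2) := by
  set G : ℝ → ℝ≥0∞ := fun s => (‖g' s‖₊ : ℝ≥0∞) with hGdef
  have hGfin : ∀ s, G s ≠ ⊤ := fun s => ENNReal.coe_ne_top
  -- measurability of g' on (0, ∞)
  have hsm : AEStronglyMeasurable g' (volume.restrict (Ioi (0:ℝ))) := by
    have hU : Ioi (0:ℝ) = ⋃ n : ℕ, Ioc ((n:ℝ)+1)⁻¹ ((n:ℝ)+1) := by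
      ext x
      simp only [mem_Ioi, mem_iUnion, mem_Ioc]
      constructor
      · intro hx
        obtain ⟨n, hn⟩ := exists_nat_gt (max x x⁻¹)
        have h1 : x⁻¹ < (n:ℝ) + 1 := by
          have := le_max_right x x⁻¹; linarith
        have h2 : x ≤ (n:ℝ) + 1 := by
          have := le_max_left x x⁻¹; linarith
        refine ⟨n, ?_, h2⟩
        have hinv : ((n:ℝ)+1)⁻¹ < (x⁻¹)⁻¹ := inv_strictAnti₀ (inv_pos.mpr hx) h1
        rwa [inv_inv] at hinv
      · rintro ⟨n, h1, _⟩
        exact lt_trans (by positivity) h1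
    rw [hU, aestronglyMeasurable_iUnion_iff]
    intro n
    have hle : ((n:ℝ)+1)⁻¹ ≤ (n:ℝ)+1 := by
      have h1 : (1:ℝ) ≤ (n:ℝ)+1 := by
        have := Nat.cast_nonneg (α := ℝ) n
        linarith
      calc ((n:ℝ)+1)⁻¹ ≤ 1 := by
            rw [inv_le_one_iff₀]; right; exact h1
        _ ≤ (n:ℝ)+1 := h1
    exact ((intervalIntegrable_iff_integrableOn_Ioc_of_le hle).mp
      (hloc _ (mem_Ioi.mpr (by positivity)) _ (mem_Ioi.mpr (by positivity)))).aestronglyMeasurable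
  have hG : AEMeasurable G (volume.restrict (Ioi (0:ℝ))) := hsm.enorm
  -- the weighted integral
  set I2 : ℝ≥0∞ := ∫⁻ s in Ioi (0:ℝ), ENNReal.ofReal (s ^ (-(2*γ))) * (G s)^2 with hI2def
  have hI2eq : (∫⁻ r in Ioi (0:ℝ), ENNReal.ofReal (r ^ (-(2*γ)) * ‖g' r‖^2)) = I2 := by
    rw [hI2def]
    apply lintegral_congr_ae
    filter_upwards [ae_restrict_mem measurableSet_Ioi] with s hs
    rw [ENNReal.ofReal_mul (Real.rpow_nonneg hs.le _), ENNReal.ofReal_pow (norm_nonneg _),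
      ofReal_norm]
    rfl
  have hI2fin : I2 ≠ ⊤ := by rw [← hI2eq]; exact hint.ne
  set h2fun : ℝ → ℝ≥0∞ := fun s => ENNReal.ofReal (s ^ (-(2*γ))) * (G s)^2 with hh2def
  -- truncated weighted integrals
  set T : ℝ → ℝ≥0∞ := fun r => ∫⁻ s in Ioc (0:ℝ) r, h2fun s with hTdef
  have hTle : ∀ r, T r ≤ I2 := fun r => lintegral_mono_set Ioc_subset_Ioi_self
  have hTfin : ∀ r, T r ≠ ⊤ := fun r => ((hTle r).trans_lt hI2fin.lt_top).ne
  set K : ℝ → ℝ≥0∞ := fun r => ∫⁻ s in Ioc (0:ℝ) r, G s with hKdef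
  have h2γ : (-1:ℝ) < 2*γ := by linarith
  have hKsq : ∀ r, 0 < r → (K r)^2 ≤ T r * ENNReal.ofReal (r ^ (2*γ+1)/(2*γ+1)) :=
    fun r hr => aux_CS G hG h2γ hr
  have hKfin : ∀ r, 0 < r → K r ≠ ⊤ := by
    intro r hr htop
    have h2 := hKsq r hr
    rw [htop, ENNReal.top_pow (by norm_num)] at h2
    exact ENNReal.mul_ne_top (hTfin r) ENNReal.ofReal_ne_top (top_le_iff.mp h2)
  -- integrability on (0, r]
  have hInt : ∀ r : ℝ, 0 < r → IntegrableOn g' (Ioc (0:ℝ) r) volume := by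
    intro r hr
    refine ⟨hsm.mono_measure (Measure.restrict_mono Ioc_subset_Ioi_self le_rfl), ?_⟩
    exact (hKfin r hr).lt_top
  -- primitive from 0
  set ν : ℝ → ℂ := fun r => ∫ s in Ioc (0:ℝ) r, g' s with hνdef
  have hνdiff : ∀ s ∈ Ioi (0:ℝ), ∀ t ∈ Ioi (0:ℝ), ν t - ν s = ∫ u in s..t, g' u := by
    have key : ∀ s t : ℝ, 0 < s → s ≤ t → ν t - ν s = ∫ u in s..t, g' u := by
      intro s t hs hst
      rw [intervalIntegral.integral_of_le hst]
      have hsplit : Ioc (0:ℝ) t = Ioc 0 s ∪ Ioc s t := (Ioc_union_Ioc_eq_Ioc hs.le hst).symm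
      simp only [hνdef]
      rw [hsplit, setIntegral_union (Ioc_disjoint_Ioc_of_le le_rfl) measurableSet_Ioc
        (hInt s hs) ((hInt t (lt_of_lt_of_le hs hst)).mono_set (Ioc_subset_Ioc_left hs.le))]
      ring
    intro s hs t ht
    rcases le_total s t with h | h
    · exact key s t hs h
    · rw [intervalIntegral.integral_symm, ← key t s ht h]; ring
  set A : ℂ := (((1:ℝ) ^ γ : ℝ) : ℂ) * φ 1 - ν 1 with hAdef
  have hψA : ∀ r ∈ Ioi (0:ℝ), ((r ^ γ : ℝ) : ℂ) * φ r - A = ν r := by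
    intro r hr
    have h1 := hFTC 1 (by norm_num) r hr
    have h2 := hνdiff 1 (by norm_num) r hr
    rw [hAdef]
    have h3 : ((r^γ:ℝ):ℂ) * φ r - (((1:ℝ)^γ:ℝ):ℂ) * φ 1 = ν r - ν 1 := by rw [h1, ← h2]
    linear_combination h3
  -- norm identity
  have hnorm : ∀ r ∈ Ioi (0:ℝ), ‖φ r - A * ((r ^ (-γ) : ℝ) : ℂ)‖ = r ^ (-γ) * ‖ν r‖ := by
    intro r hr
    have hr0 : (0:ℝ) < r := hr
    have hrg : ((r ^ (-γ):ℝ):ℂ) * ((r^γ:ℝ):ℂ) = 1 := by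
      rw [← Complex.ofReal_mul, ← Real.rpow_add hr0]
      norm_num
    have hφr : φ r - A * ((r ^ (-γ):ℝ):ℂ)
        = ((r ^ (-γ):ℝ):ℂ) * (((r^γ:ℝ):ℂ) * φ r - A) := by
      calc φ r - A * ((r ^ (-γ):ℝ):ℂ)
          = (((r^(-γ):ℝ):ℂ) * ((r^γ:ℝ):ℂ)) * φ r - ((r^(-γ):ℝ):ℂ) * A := by
            rw [hrg]; ring
        _ = _ := by ring
    rw [hφr, hψA r hr, norm_mul, Complex.norm_real, Real.norm_eq_abs,
      abs_of_pos (Real.rpow_pos_of_pos hr0 _)]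
  have hνK : ∀ r, (‖ν r‖₊ : ℝ≥0∞) ≤ K r := fun r => enorm_integral_le_lintegral_enorm _
  -- the truncated integral tends to zero
  have hmrpow : ∀ e : ℝ, Measurable fun s : ℝ => ENNReal.ofReal (s ^ e) := by
    intro e; apply Measurable.ennreal_ofReal; measurability
  have hah2 : AEMeasurable h2fun (volume.restrict (Ioi (0:ℝ))) :=
    (hmrpow _).aemeasurable.mul (hG.pow aemeasurable_const)
  have hind : ∀ u : ℝ, T u = ∫⁻ s in Ioi (0:ℝ), (Ioc (0:ℝ) u).indicator h2fun s := by
    intro u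
    rw [hTdef, lintegral_indicator measurableSet_Ioc,
      Measure.restrict_restrict measurableSet_Ioc, inter_eq_left.mpr Ioc_subset_Ioi_self]
  have hT0 : Tendsto T (𝓝[>] (0:ℝ)) (𝓝 0) := by
    rw [ENNReal.tendsto_nhds_zero]
    intro ε hε
    have hseq : Tendsto (fun n : ℕ => T ((n:ℝ)+1)⁻¹) atTop (𝓝 0) := by
      simp only [hind]
      have h00 : (0:ℝ≥0∞) = ∫⁻ s in Ioi (0:ℝ), (fun _ : ℝ => (0:ℝ≥0∞)) s := by simp
      rw [h00]
      apply tendsto_lintegral_of_dominated_convergence' h2fun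
      · intro n; exact hah2.indicator measurableSet_Ioc
      · intro n; exact ae_of_all _ fun s => Set.indicator_le_self _ _ s
      · exact hI2fin
      · filter_upwards [ae_restrict_mem measurableSet_Ioi] with s hs
        have hev : ∀ᶠ n : ℕ in atTop,
            (Ioc (0:ℝ) ((n:ℝ)+1)⁻¹).indicator h2fun s = 0 := by
          obtain ⟨N, hN⟩ := exists_nat_gt s⁻¹
          filter_upwards [eventually_ge_atTop N] with n hn
          apply indicator_of_notMem
          intro hmem
          have hn1 : s⁻¹ < (n:ℝ) + 1 := by
            have : (N:ℝ) ≤ (n:ℝ) := by exact_mod_cast hn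
            linarith
          have h1 : ((n:ℝ)+1)⁻¹ < s := by
            have hinv : ((n:ℝ)+1)⁻¹ < (s⁻¹)⁻¹ := inv_strictAnti₀ (inv_pos.mpr hs) hn1
            rwa [inv_inv] at hinv
          exact absurd hmem.2 (not_le.mpr h1)
        exact Tendsto.congr' (EventuallyEq.symm hev) tendsto_const_nhds
    obtain ⟨n, hn⟩ := (ENNReal.tendsto_nhds_zero.mp hseq ε hε).exists
    filter_upwards [Ioc_mem_nhdsGT_of_mem
      (⟨le_refl (0:ℝ), by positivity⟩ : (0:ℝ) ∈ Ico (0:ℝ) ((n:ℝ)+1)⁻¹)] with r hr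
    exact le_trans (lintegral_mono_set (Ioc_subset_Ioc_right hr.2)) hn
  -- part 1 : the limit
  have hlim : Tendsto (fun r : ℝ => ‖φ r - A * ((r ^ (-γ) : ℝ) : ℂ)‖ * r ^ (-(1:ℝ)/2))
      (𝓝[>] (0:ℝ)) (𝓝 0) := by
    have hbound : ∀ᶠ r in 𝓝[>] (0:ℝ), ‖φ r - A * ((r ^ (-γ):ℝ):ℂ)‖ * r ^ (-(1:ℝ)/2)
        ≤ Real.sqrt ((T r).toReal) * Real.sqrt (1/(2*γ+1)) := by
      filter_upwards [self_mem_nhdsWithin] with r hr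
      have hr0 : (0:ℝ) < r := hr
      have h1 : ‖ν r‖ ≤ (K r).toReal := by
        calc ‖ν r‖ = ((‖ν r‖₊ : ℝ≥0∞)).toReal := by simp
          _ ≤ (K r).toReal := ENNReal.toReal_mono (hKfin r hr0) (hνK r)
      have h2 : (K r).toReal ^ 2 ≤ (T r).toReal * (r ^ (2*γ+1)/(2*γ+1)) := by
        calc (K r).toReal ^ 2 = ((K r)^2).toReal := (ENNReal.toReal_pow _ _).symm
          _ ≤ (T r * ENNReal.ofReal (r ^ (2*γ+1)/(2*γ+1))).toReal :=
              ENNReal.toReal_mono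
                (ENNReal.mul_ne_top (hTfin r) ENNReal.ofReal_ne_top) (hKsq r hr0)
          _ = (T r).toReal * (r ^ (2*γ+1)/(2*γ+1)) := by
              rw [ENNReal.toReal_mul, ENNReal.toReal_ofReal (by positivity)]
      have h3 : (K r).toReal ≤ Real.sqrt ((T r).toReal * (r ^ (2*γ+1)/(2*γ+1))) :=
        (Real.le_sqrt ENNReal.toReal_nonneg (by positivity)).mpr h2
      have hsqrtr : Real.sqrt (r ^ (2*γ+1)) = r ^ (γ + 1/2) := by
        rw [Real.sqrt_eq_rpow, ← Real.rpow_mul hr0.le,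
          show (2*γ+1) * (1/2) = γ + 1/2 by ring]
      have hν2 : ‖ν r‖ ≤ Real.sqrt ((T r).toReal) * r ^ (γ + 1/2) * Real.sqrt (1/(2*γ+1)) := by
        refine h1.trans (h3.trans (le_of_eq ?_))
        rw [show (T r).toReal * (r ^ (2*γ+1)/(2*γ+1))
            = (T r).toReal * r ^ (2*γ+1) * (1/(2*γ+1)) by ring,
          Real.sqrt_mul (by positivity), Real.sqrt_mul ENNReal.toReal_nonneg, hsqrtr]
      have hpow : r ^ (-γ) * r ^ (γ + 1/2) * r ^ (-(1:ℝ)/2) = 1 := by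
        rw [← Real.rpow_add hr0, ← Real.rpow_add hr0,
          show -γ + (γ + 1/2) + -(1:ℝ)/2 = 0 by ring, Real.rpow_zero]
      rw [hnorm r hr]
      calc r ^ (-γ) * ‖ν r‖ * r ^ (-(1:ℝ)/2)
          ≤ r ^ (-γ) * (Real.sqrt ((T r).toReal) * r ^ (γ + 1/2) * Real.sqrt (1/(2*γ+1)))
              * r ^ (-(1:ℝ)/2) := by
            have hx1 : (0:ℝ) ≤ r ^ (-γ) := Real.rpow_nonneg hr0.le _
            have hx2 : (0:ℝ) ≤ r ^ (-(1:ℝ)/2) := Real.rpow_nonneg hr0.le _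
            exact mul_le_mul_of_nonneg_right (mul_le_mul_of_nonneg_left hν2 hx1) hx2
        _ = (r ^ (-γ) * r ^ (γ + 1/2) * r ^ (-(1:ℝ)/2))
              * (Real.sqrt ((T r).toReal) * Real.sqrt (1/(2*γ+1))) := by ring
        _ = Real.sqrt ((T r).toReal) * Real.sqrt (1/(2*γ+1)) := by rw [hpow, one_mul]
    have hTR : Tendsto (fun r => (T r).toReal) (𝓝[>] (0:ℝ)) (𝓝 0) := by
      have := (ENNReal.tendsto_toReal (by simp : (0:ℝ≥0∞) ≠ ⊤)).comp hT0
      simpa [Function.comp_def] using this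
    have hBt : Tendsto (fun r => Real.sqrt ((T r).toReal) * Real.sqrt (1/(2*γ+1)))
        (𝓝[>] (0:ℝ)) (𝓝 0) := by
      have hsq : Tendsto (fun r => Real.sqrt ((T r).toReal)) (𝓝[>] (0:ℝ)) (𝓝 0) := by
        have := (Real.continuous_sqrt.tendsto 0).comp hTR
        simpa [Function.comp_def] using this
      simpa using hsq.mul_const (Real.sqrt (1/(2*γ+1)))
    refine squeeze_zero' ?_ hbound hBt
    filter_upwards [self_mem_nhdsWithin] with r hr
    exact mul_nonneg (norm_nonneg _) (Real.rpow_nonneg (le_of_lt hr) _)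
  -- part 2 : the Hardy inequality
  refine ⟨A, hlim, ?_⟩
  rw [hI2eq]
  have hmono : ∫⁻ r in Ioi (0:ℝ), ENNReal.ofReal (‖φ r - A * ((r ^ (-γ):ℝ):ℂ)‖^2 / r^2)
      ≤ ∫⁻ r in Ioi (0:ℝ), ENNReal.ofReal (r ^ (-(2*γ) - 2)) * (K r)^2 := by
    apply lintegral_mono_ae
    filter_upwards [ae_restrict_mem measurableSet_Ioi] with r hr
    have hr0 : (0:ℝ) < r := hr
    have e1 : ‖φ r - A * ((r^(-γ):ℝ):ℂ)‖^2 / r^2 = r ^ (-(2*γ) - 2) * ‖ν r‖^2 := by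
      rw [hnorm r hr, mul_pow]
      have ha1 : ((r^(-γ):ℝ))^2 = r ^ (-(2*γ)) := by
        rw [← Real.rpow_natCast (r^(-γ)) 2, ← Real.rpow_mul hr0.le,
          show -γ * ((2:ℕ):ℝ) = -(2*γ) by push_cast; ring]
      have ha2 : (r:ℝ)^2 = r ^ (2:ℝ) := by
        rw [← Real.rpow_natCast r 2]; norm_num
      have ha3 : r ^ (-(2*γ)) / r ^ (2:ℝ) = r ^ (-(2*γ) - 2) := by
        rw [← Real.rpow_sub hr0]
      rw [ha1, ha2, ← ha3]
      ring
    rw [e1, ENNReal.ofReal_mul (Real.rpow_nonneg hr0.le _),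
      ENNReal.ofReal_pow (norm_nonneg _), ofReal_norm]
    exact mul_le_mul_right (pow_le_pow_left' (hνK r) 2) _
  exact hmono.trans (aux_hardy γ hγ G hG hGfin)
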